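/- Let m, M be positive integers, let f_1, …, f_M ∈ ℝ^{2^m} and r_1, …, r_M ∈ ℝ, and define the loss function L : ℝ^m → ℝ by L(θ) = (1/(2M)) · Σ_{t=1}^M ( w(θ)·f_t − r_t )². Then for each j ∈ {1, …, m}, the partial derivative of L with respect to θ_j at θ equals (1/M) · Σ_{t=1}^M ( w(θ)·f_t − r_t ) · ( w(θ + (π/2)·e_j)·f_t ), where e_j is the j-th standard basis vector of ℝ^m and · denotes the Euclidean dot product on ℝ^{2^m}. -/

import Mathlib

open Real Finset Matrix

/-- The weight vector `w(θ) ∈ ℝ^{2^m}` of the quantum RBF network, defined as the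
Kronecker product `⊗_{j=1}^m (cos θ_j, sin θ_j)`, indexed by `t` via its binary digits. -/
noncomputable def weight (m : ℕ) (θ : Fin m → ℝ) : Fin (2 ^ m) → ℝ := fun t =>
  ∏ j : Fin m, if (t : ℕ) / 2 ^ (j : ℕ) % 2 = 0 then Real.cos (θ j) else Real.sin (θ j)

lemma weight_update_hasDerivAt (m : ℕ) (θ : Fin m → ℝ) (j : Fin m) (t : Fin (2 ^ m)) :
    HasDerivAt (fun s => weight m (Function.update θ j s) t)
      (weight m (θ + Pi.single j (π / 2)) t) (θ j) := by
  unfold weight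
  have h1 : ∀ s : ℝ, (∏ i : Fin m, if (t : ℕ) / 2 ^ (i : ℕ) % 2 = 0 then
        Real.cos (Function.update θ j s i) else Real.sin (Function.update θ j s i))
      = (if (t : ℕ) / 2 ^ (j : ℕ) % 2 = 0 then Real.cos s else Real.sin s) *
        ∏ i ∈ Finset.univ.erase j, (if (t : ℕ) / 2 ^ (i : ℕ) % 2 = 0 then
          Real.cos (θ i) else Real.sin (θ i)) := by
    intro s
    rw [← Finset.mul_prod_erase Finset.univ _ (Finset.mem_univ j)]
    congr 1
    · simp
    · exact Finset.prod_congr rfl fun i hi => by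
        rw [Function.update_of_ne (Finset.ne_of_mem_erase hi)]
  have h2 : (∏ i : Fin m, if (t : ℕ) / 2 ^ (i : ℕ) % 2 = 0 then
        Real.cos ((θ + Pi.single j (π / 2) : Fin m → ℝ) i)
        else Real.sin ((θ + Pi.single j (π / 2) : Fin m → ℝ) i))
      = (if (t : ℕ) / 2 ^ (j : ℕ) % 2 = 0 then -Real.sin (θ j) else Real.cos (θ j)) *
        ∏ i ∈ Finset.univ.erase j, (if (t : ℕ) / 2 ^ (i : ℕ) % 2 = 0 then
          Real.cos (θ i) else Real.sin (θ i)) := by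
    rw [← Finset.mul_prod_erase Finset.univ _ (Finset.mem_univ j)]
    congr 1
    · simp [Real.cos_add, Real.sin_add]
    · exact Finset.prod_congr rfl fun i hi => by
        simp [Pi.single_eq_of_ne (Finset.ne_of_mem_erase hi)]
  simp only [h1]
  rw [h2]
  refine HasDerivAt.mul_const ?_ _
  by_cases hc : (t : ℕ) / 2 ^ (j : ℕ) % 2 = 0
  · simpa [hc] using Real.hasDerivAt_cos (θ j)
  · simpa [hc] using Real.hasDerivAt_sin (θ j)

/-- For the loss `L(θ) = (1/(2M))·Σ_t (w(θ)·f_t − r_t)²`, the partial derivative with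
respect to `θ_j` at `θ` equals `(1/M)·Σ_t (w(θ)·f_t − r_t)·(w(θ + (π/2)e_j)·f_t)`. -/
theorem loss_hasDerivAt (m M : ℕ) (hm : 0 < m) (hM : 0 < M)
    (f : Fin M → Fin (2 ^ m) → ℝ) (r : Fin M → ℝ) (θ : Fin m → ℝ) (j : Fin m) :
    HasDerivAt
      (fun s : ℝ => (1 / (2 * (M : ℝ))) *
        ∑ t : Fin M, (weight m (Function.update θ j s) ⬝ᵥ f t - r t) ^ 2)
      ((1 / (M : ℝ)) * ∑ t : Fin M,
        (weight m θ ⬝ᵥ f t - r t) * (weight m (θ + Pi.single j (π / 2)) ⬝ᵥ f t))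
      (θ j) := by
  have key : ∀ t : Fin M, HasDerivAt (fun s => weight m (Function.update θ j s) ⬝ᵥ f t)
      (weight m (θ + Pi.single j (π / 2)) ⬝ᵥ f t) (θ j) := by
    intro t
    simp only [dotProduct]
    exact HasDerivAt.fun_sum fun i _ => (weight_update_hasDerivAt m θ j i).mul_const (f t i)
  have h := HasDerivAt.const_mul (1 / (2 * (M : ℝ)))
    (HasDerivAt.fun_sum fun t (_ : t ∈ Finset.univ) => ((key t).sub_const (r t)).fun_pow 2)
  refine h.congr_deriv ?_
  have hM' : (M : ℝ) ≠ 0 := Nat.cast_ne_zero.mpr hM.ne'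
  simp only [Function.update_eq_self, pow_one, Nat.cast_ofNat]
  rw [Finset.mul_sum, Finset.mul_sum]
  refine Finset.sum_congr rfl fun t _ => ?_
  field_simp
  ring
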